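/- arXiv:2009.01345 — 3 statements merged into one kernel-verified Lean document; each statement's English description precedes it below -/
import Mathlib

section
/- Let p : I^n → ℝ be symmetric coefficients with finite support, and M^{(j)} ∈ ℝ^{n×n} for j ∈ I a family of matrices. Then the quantity Σ_{i ∈ I^n} p(i) · det(M^{(i₁)}_1, …, M^{(iₙ)}_n) is invariant under simultaneous conjugation: replacing every M^{(j)} by S⁻¹ M^{(j)} S for an invertible matrix S does not change its value. -/
open Finset Matrix

/-- Reindexing a sum over the support of symmetric coefficients by a permutation. -/
private lemma sum_support_comp_perm {n : ℕ} {I : Type*} (p : (Fin n → I) →₀ ℝ)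
    (hp : ∀ (σ : Equiv.Perm (Fin n)) (i : Fin n → I), p (i ∘ σ) = p i)
    (σ : Equiv.Perm (Fin n)) (q : (Fin n → I) → ℝ) :
    ∑ i ∈ p.support, q i = ∑ i ∈ p.support, q (i ∘ σ) := by
  refine Finset.sum_nbij' (fun i => i ∘ σ.symm) (fun i => i ∘ σ) ?_ ?_ ?_ ?_ ?_
  · intro i hi
    simpa [Finsupp.mem_support_iff, hp σ.symm i] using hi
  · intro i hi
    simpa [Finsupp.mem_support_iff, hp σ i] using hi
  · intro i _; funext c; simp
  · intro i _; funext c; simp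
  · intro i _
    congr 1
    funext c; simp

/-- Multilinear expansion of the determinant of a matrix whose `c`-th column is
`A c * S` column `c`, over the columns of `S`. -/
private lemma det_columns_mul_expand {n : ℕ} (A : Fin n → Matrix (Fin n) (Fin n) ℝ)
    (S : Matrix (Fin n) (Fin n) ℝ) :
    (Matrix.of fun r c => (A c * S) r c).det
      = ∑ f : Fin n → Fin n, (∏ c, S (f c) c) *
          (Matrix.of fun r c => A c r (f c)).det := by
  rw [← Matrix.det_transpose]
  have h1 : (Matrix.of fun r c => (A c * S) r c)ᵀ
      = Matrix.of fun c => ∑ k, S k c • (fun r => A c r k) := by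
    ext c r
    simp [Matrix.mul_apply, Finset.sum_apply, mul_comm]
  rw [h1]
  have h2 : (Matrix.of fun c => ∑ k, S k c • (fun r => A c r k)).det
      = (Matrix.detRowAlternating (R := ℝ) (n := Fin n)).toMultilinearMap
          (fun c => ∑ k : Fin n, S k c • (fun r => A c r k)) := rfl
  rw [h2, MultilinearMap.map_sum]
  refine Finset.sum_congr rfl fun f _ => ?_
  have h3 : (Matrix.detRowAlternating (R := ℝ) (n := Fin n)).toMultilinearMap
        (fun c => S (f c) c • (fun r => A c r (f c)))
      = (∏ c, S (f c) c) •
        (Matrix.detRowAlternating (R := ℝ) (n := Fin n)).toMultilinearMap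
          (fun c => (fun r => A c r (f c))) :=
    MultilinearMap.map_smul_univ _ _ _
  rw [h3]
  rw [smul_eq_mul]
  congr 1
  have : (Matrix.detRowAlternating (R := ℝ) (n := Fin n)).toMultilinearMap
        (fun c => (fun r => A c r (f c)))
      = (Matrix.of fun c r => A c r (f c)).det := rfl
  rw [this, ← Matrix.det_transpose]
  congr 1

/-- For symmetric coefficients `p : Iⁿ → ℝ` with finite support and a family of
matrices `M⁽ʲ⁾`, the quantity `Σᵢ p(i) det(M^{(i₁)}_1, …, M^{(iₙ)}_n)` (where the
`c`-th column is the `c`-th column of `M^{(i_c)}`) is invariant under simultaneous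
conjugation `M⁽ʲ⁾ ↦ S⁻¹ M⁽ʲ⁾ S` by an invertible matrix `S`. -/
theorem det_sum_invariant_conjugation {n : ℕ} {I : Type*}
    (p : (Fin n → I) →₀ ℝ)
    (hp : ∀ (σ : Equiv.Perm (Fin n)) (i : Fin n → I), p (i ∘ σ) = p i)
    (M : I → Matrix (Fin n) (Fin n) ℝ)
    (S : Matrix (Fin n) (Fin n) ℝ) (hS : IsUnit S.det) :
    ∑ i ∈ p.support, p i * (Matrix.of fun r c => (S⁻¹ * M (i c) * S) r c).det
      = ∑ i ∈ p.support, p i * (Matrix.of fun r c => M (i c) r c).det := by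
  classical
  set RHS := ∑ i ∈ p.support, p i * (Matrix.of fun r c => M (i c) r c).det with hRHS
  -- Step 1: factor out S⁻¹
  have step1 : ∀ i : Fin n → I,
      (Matrix.of fun r c => (S⁻¹ * M (i c) * S) r c)
        = S⁻¹ * (Matrix.of fun r c => (M (i c) * S) r c) := by
    intro i
    ext r c
    rw [Matrix.of_apply, Matrix.mul_assoc, Matrix.mul_apply, Matrix.mul_apply]
    rfl
  set A : (Fin n → Fin n) → ℝ := fun f =>
    ∑ i ∈ p.support, p i * (Matrix.of fun r c => M (i c) r (f c)).det with hA
  -- Step 2: expand along columns of S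
  have step2 : ∑ i ∈ p.support, p i * (Matrix.of fun r c => (M (i c) * S) r c).det
      = ∑ f : Fin n → Fin n, (∏ c, S (f c) c) * A f := by
    calc ∑ i ∈ p.support, p i * (Matrix.of fun r c => (M (i c) * S) r c).det
        = ∑ i ∈ p.support, ∑ f : Fin n → Fin n,
            p i * ((∏ c, S (f c) c) * (Matrix.of fun r c => M (i c) r (f c)).det) := by
          refine Finset.sum_congr rfl fun i _ => ?_
          rw [det_columns_mul_expand (fun c => M (i c)) S, Finset.mul_sum]
      _ = ∑ f : Fin n → Fin n, ∑ i ∈ p.support,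
            p i * ((∏ c, S (f c) c) * (Matrix.of fun r c => M (i c) r (f c)).det) :=
          Finset.sum_comm
      _ = ∑ f : Fin n → Fin n, (∏ c, S (f c) c) * A f := by
          refine Finset.sum_congr rfl fun f _ => ?_
          rw [hA, Finset.mul_sum]
          exact Finset.sum_congr rfl fun i _ => by ring
  -- Step 3: non-injective index functions contribute 0
  have step3 : ∀ f : Fin n → Fin n, ¬ Function.Injective f → A f = 0 := by
    intro f hf
    rw [Function.Injective] at hf
    push_neg at hf
    obtain ⟨a, b, hab, hne⟩ := hf
    have key : A f = -A f := by
      simp only [hA]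
      conv_lhs => rw [sum_support_comp_perm p hp (Equiv.swap a b)]
      rw [← Finset.sum_neg_distrib]
      refine Finset.sum_congr rfl fun i _ => ?_
      rw [hp]
      have hm : (Matrix.of fun r c => M ((i ∘ Equiv.swap a b) c) r (f c))
          = (Matrix.of fun r c => M (i c) r (f c)).submatrix id (Equiv.swap a b) := by
        ext r c
        simp [Matrix.submatrix_apply, Equiv.apply_swap_eq_self hab]
      rw [hm, Matrix.det_permute', Equiv.Perm.sign_swap hne]
      push_cast
      ring
    linarith
  -- Step 4: permutations contribute sign σ * RHS
  have step4 : ∀ σ : Equiv.Perm (Fin n),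
      A ⇑σ = ((Equiv.Perm.sign σ : ℤ) : ℝ) * RHS := by
    intro σ
    simp only [hA]
    rw [sum_support_comp_perm p hp σ]
    rw [hRHS, Finset.mul_sum]
    refine Finset.sum_congr rfl fun i _ => ?_
    rw [hp]
    have hm : (Matrix.of fun r c => M ((i ∘ σ) c) r (σ c))
        = (Matrix.of fun r c => M (i c) r c).submatrix id σ := by
      ext r c
      simp [Matrix.submatrix_apply]
    rw [hm, Matrix.det_permute']
    ring
  -- Step 5: recombine into det S
  have step5 : ∑ f : Fin n → Fin n, (∏ c, S (f c) c) * A f = S.det * RHS := by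
    calc ∑ f : Fin n → Fin n, (∏ c, S (f c) c) * A f
        = ∑ f ∈ Finset.univ.filter (fun f : Fin n → Fin n => Function.Bijective f),
            (∏ c, S (f c) c) * A f := by
          refine (Finset.sum_subset (Finset.filter_subset _ _) fun f _ hbij => ?_).symm
          have : ¬ Function.Injective f := by
            intro h
            exact hbij (Finset.mem_filter.2 ⟨Finset.mem_univ _,
              Finite.injective_iff_bijective.mp h⟩)
          rw [step3 f this, mul_zero]
      _ = ∑ σ : Equiv.Perm (Fin n), (∏ c, S (σ c) c) * A ⇑σ := by
          refine Finset.sum_bij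
            (fun f h => Equiv.ofBijective f (Finset.mem_filter.1 h).2)
            (fun _ _ => Finset.mem_univ _) (fun _ _ _ _ h => by injection h)
            (fun b _ => ⟨b, Finset.mem_filter.2 ⟨Finset.mem_univ _, b.bijective⟩,
              Equiv.coe_fn_injective rfl⟩) fun _ _ => rfl
      _ = (∑ σ : Equiv.Perm (Fin n),
            ((Equiv.Perm.sign σ : ℤ) : ℝ) * ∏ c, S (σ c) c) * RHS := by
          rw [Finset.sum_mul]
          exact Finset.sum_congr rfl fun σ _ => by rw [step4]; ring
      _ = S.det * RHS := by rw [Matrix.det_apply']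
  -- Assemble
  have hdet : ∀ i : Fin n → I,
      (Matrix.of fun r c => (S⁻¹ * M (i c) * S) r c).det
        = S⁻¹.det * (Matrix.of fun r c => (M (i c) * S) r c).det := by
    intro i
    rw [step1 i, Matrix.det_mul]
  calc ∑ i ∈ p.support, p i * (Matrix.of fun r c => (S⁻¹ * M (i c) * S) r c).det
      = S⁻¹.det * ∑ i ∈ p.support, p i * (Matrix.of fun r c => (M (i c) * S) r c).det := by
        rw [Finset.mul_sum]
        exact Finset.sum_congr rfl fun i _ => by rw [hdet i]; ring
    _ = S⁻¹.det * (S.det * RHS) := by rw [step2, step5]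
    _ = RHS := by
        rw [Matrix.det_nonsing_inv, Ring.inverse_eq_inv', ← mul_assoc,
          inv_mul_cancel₀ hS.ne_zero, one_mul]
end

section
/- Let B be an n×n complex matrix with eigenvalues b₁,…,bₙ (with multiplicity), and let q(x₁,…,xₙ) = Σ_{i ∈ ℕ^n} p_i x₁^{i₁}⋯xₙ^{iₙ} be a symmetric polynomial. Then q(b₁,…,bₙ) = Σ_{i ∈ ℕ^n} p_i · det(B^{i₁}_1, …, B^{iₙ}_n), where B^k_j denotes the j-th column of the matrix power B^k. -/
open Finset in
theorem exists_perm_comp_eq {α : Type*} : ∀ {n : ℕ} (b d : Fin n → α),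
    Multiset.map b Finset.univ.val = Multiset.map d Finset.univ.val →
    ∃ σ : Equiv.Perm (Fin n), b ∘ σ = d := by
  intro n
  induction n with
  | zero => exact fun b d _ => ⟨1, funext fun i => i.elim0⟩
  | succ n ih =>
    intro b d h
    have key : ∀ (f : Fin (n+1) → α),
        Multiset.map f Finset.univ.val
          = f 0 ::ₘ Multiset.map (f ∘ Fin.succ) Finset.univ.val := by
      intro f
      rw [Fin.univ_succ, Finset.cons_val, Multiset.map_cons, Finset.map_val,
        Multiset.map_map]
      rfl
    have hmem : d 0 ∈ Multiset.map b Finset.univ.val := by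
      rw [h, key]; exact Multiset.mem_cons_self _ _
    obtain ⟨j, -, hj⟩ := Multiset.mem_map.mp hmem
    set c : Fin (n+1) → α := b ∘ (Equiv.swap 0 j) with hc
    have hcu : Multiset.map c Finset.univ.val = Multiset.map b Finset.univ.val := by
      have h1 : Multiset.map (⇑(Equiv.swap 0 j)) Finset.univ.val
          = (Finset.univ.val : Multiset (Fin (n+1))) := by
        have := congrArg Finset.val (Finset.map_univ_equiv (Equiv.swap 0 j))
        simp only [Finset.map_val] at this
        simpa using this
      rw [hc]
      conv_rhs => rw [← h1]
      rw [Multiset.map_map]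
    have h' : Multiset.map (c ∘ Fin.succ) Finset.univ.val
        = Multiset.map (d ∘ Fin.succ) Finset.univ.val := by
      have := (key c).symm.trans ((hcu.trans h).trans (key d))
      have hc0 : c 0 = d 0 := by
        simp [hc, Equiv.swap_apply_left, hj]
      rw [hc0] at this
      exact (Multiset.cons_inj_right _).mp this
    obtain ⟨σ', hσ'⟩ := ih (c ∘ Fin.succ) (d ∘ Fin.succ) h'
    refine ⟨Equiv.swap 0 j * Equiv.Perm.decomposeFin.symm (0, σ'), funext fun i => ?_⟩
    refine Fin.cases ?_ (fun i => ?_) i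
    · simp [Equiv.swap_apply_left, hj]
    · have h2 : (Equiv.Perm.decomposeFin.symm (0, σ')) i.succ = (σ' i).succ := by
        simp [Equiv.Perm.decomposeFin_symm_apply_succ]
      have := congrFun hσ' i
      simp only [Function.comp_apply] at this ⊢
      simp only [Equiv.Perm.mul_apply, h2]
      exact this


open Module in
theorem exists_triangular_basis : ∀ (n : ℕ) (V : Type) (_ : AddCommGroup V)
    (_ : Module ℂ V) (_ : FiniteDimensional ℂ V) (_ : Module.finrank ℂ V = n)
    (f : Module.End ℂ V),
    ∃ c : Basis (Fin n) ℂ V, ((LinearMap.toMatrix c c) f).BlockTriangular id := by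
  intro n
  induction n with
  | zero =>
    intro V _ _ _ hdim f
    haveI : Subsingleton V := finrank_zero_iff.mp hdim
    exact ⟨Basis.empty V, fun i j _ => i.elim0⟩
  | succ n ih =>
    intro V _ _ _ hdim f
    haveI : Nontrivial V := by
      rw [← Module.finrank_pos_iff (R := ℂ)]; omega
    obtain ⟨μ, hμ⟩ := Module.End.exists_eigenvalue f
    obtain ⟨v, hv⟩ := hμ.exists_hasEigenvector
    have hv0 : v ≠ 0 := hv.right
    have hfv : f v = μ • v := hv.apply_eq_smul
    set W : Submodule ℂ V := ℂ ∙ v with hWdef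
    have hvW : v ∈ W := Submodule.mem_span_singleton_self v
    have hWle : W ≤ W.comap f := by
      rw [Submodule.span_singleton_le_iff_mem]
      rw [Submodule.mem_comap, hfv]
      exact W.smul_mem μ hvW
    set fbar : Module.End ℂ (V ⧸ W) := Submodule.mapQ W W f hWle with hfbar
    have hQdim : Module.finrank ℂ (V ⧸ W) = n := by
      have h1 := Submodule.finrank_quotient_add_finrank W
      rw [finrank_span_singleton hv0, hdim] at h1
      omega
    obtain ⟨cb, hcb⟩ := ih (V ⧸ W) inferInstance inferInstance inferInstance hQdim fbar
    choose g hg using fun i => Submodule.Quotient.mk_surjective W (cb i)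
    set u : Fin (n+1) → V := Fin.cons v g with hu
    have hli : LinearIndependent ℂ u := by
      rw [Fintype.linearIndependent_iff]
      intro a ha
      rw [Fin.sum_univ_succ] at ha
      simp only [hu, Fin.cons_zero, Fin.cons_succ] at ha
      have hmk := congrArg (W.mkQ) ha
      simp only [map_add, map_sum, map_smul, map_zero, Submodule.mkQ_apply] at hmk
      rw [(Submodule.Quotient.mk_eq_zero W).mpr hvW] at hmk
      simp only [smul_zero, zero_add, hg] at hmk
      have hsucc : ∀ i : Fin n, a i.succ = 0 := by
        have := Fintype.linearIndependent_iff.mp cb.linearIndependent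
          (fun i => a i.succ) hmk
        exact this
      intro i
      refine Fin.cases ?_ hsucc i
      have : a 0 • v = 0 := by
        simpa [hsucc] using ha
      rcases smul_eq_zero.mp this with h | h
      · exact h
      · exact absurd h hv0
    have hcard : Fintype.card (Fin (n+1)) = Module.finrank ℂ V := by simp [hdim]
    set c : Basis (Fin (n+1)) ℂ V := basisOfLinearIndependentOfCardEqFinrank hli hcard
      with hcdef
    have hcu : ⇑c = u := coe_basisOfLinearIndependentOfCardEqFinrank hli hcard
    refine ⟨c, ?_⟩
    set A := (LinearMap.toMatrix cb cb) fbar with hA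
    intro r i hir
    simp only [id] at hir
    rw [LinearMap.toMatrix_apply]
    refine Fin.cases ?_ (fun j hjr => ?_) i hir
    · -- i = 0, r > 0
      intro h0r
      have : f (c 0) = μ • c 0 := by rw [hcu, hu]; simpa using hfv
      rw [this, map_smul, c.repr_self]
      have : r ≠ 0 := Fin.pos_iff_ne_zero.mp h0r
      simp [Finsupp.single_apply, (Ne.symm this)]
    · -- i = j.succ, r > j.succ
      have hmkf : W.mkQ (f (g j)) = fbar (cb j) := by
        rw [hfbar]
        rw [← hg j]
        rw [Submodule.mapQ_apply]
        rfl
      have hsum : fbar (cb j) = ∑ k, A k j • cb k := by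
        conv_lhs => rw [← cb.sum_repr (fbar (cb j))]
        refine Finset.sum_congr rfl fun k _ => ?_
        rw [hA, LinearMap.toMatrix_apply]
      have hmem : f (g j) - ∑ k, A k j • g k ∈ W := by
        rw [← Submodule.Quotient.mk_eq_zero W, Submodule.Quotient.mk_sub]
        rw [← Submodule.mkQ_apply, ← Submodule.mkQ_apply, hmkf, hsum]
        simp only [map_sum, map_smul, Submodule.mkQ_apply, hg]
        simp
      obtain ⟨t, ht⟩ := Submodule.mem_span_singleton.mp hmem
      have hfc : f (c j.succ) = ∑ m, (Fin.cons t (fun k => A k j) : Fin (n+1) → ℂ) m • c m := by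
        rw [Fin.sum_univ_succ]
        simp only [Fin.cons_zero, Fin.cons_succ, hcu, hu]
        have : f (g j) = t • v + ∑ k, A k j • g k := by
          rw [ht]; abel
        rw [this]
      rw [hfc, c.repr_sum_self]
      have hr0 : r ≠ 0 := by
        intro h; rw [h] at hjr; exact absurd hjr (by simp)
      obtain ⟨r', rfl⟩ := Fin.exists_succ_eq.mpr hr0
      rw [Fin.cons_succ]
      exact hcb (show (id j : Fin n) < id r' by
        simpa [Fin.succ_lt_succ_iff] using hjr)


section aux

variable {n : ℕ}

lemma blockTriangular_pow {T : Matrix (Fin n) (Fin n) ℂ}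
    (hT : T.BlockTriangular id) (k : ℕ) : (T ^ k).BlockTriangular id := by
  induction k with
  | zero => simpa using Matrix.blockTriangular_one
  | succ k ih => rw [pow_succ]; exact ih.mul hT

lemma diag_pow_tri {T : Matrix (Fin n) (Fin n) ℂ}
    (hT : T.BlockTriangular id) (k : ℕ) (c : Fin n) :
    (T ^ k) c c = (T c c) ^ k := by
  induction k with
  | zero => simp
  | succ k ih =>
    rw [pow_succ, pow_succ, Matrix.mul_apply]
    rw [Finset.sum_eq_single c]
    · rw [ih]
    · intro s _ hs
      rcases lt_or_gt_of_ne hs with h | h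
      · rw [blockTriangular_pow hT k (show (id : Fin n → Fin n) s < id c from h), zero_mul]
      · rw [hT (show (id : Fin n → Fin n) c < id s from h), mul_zero]
    · intro h; exact absurd (Finset.mem_univ c) h

lemma pow_conj {B P T Q : Matrix (Fin n) (Fin n) ℂ} (hB : B = P * T * Q)
    (hPQ : P * Q = 1) (hQP : Q * P = 1) (k : ℕ) : B ^ k = P * T ^ k * Q := by
  induction k with
  | zero => simpa using hPQ.symm
  | succ k ih =>
    rw [pow_succ, ih, hB, pow_succ]
    calc P * T ^ k * Q * (P * T * Q) = P * T ^ k * (Q * P) * T * Q := by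
          noncomm_ring
      _ = P * (T ^ k * T) * Q := by rw [hQP]; noncomm_ring

end aux


open Matrix Finset Equiv Polynomial in
noncomputable def Eaux {n : ℕ} (T : Matrix (Fin n) (Fin n) ℂ)
    (i : Fin n → ℕ) (f : Fin n → Fin n) : ℂ :=
  (Matrix.of fun c s => (T ^ i c) s (f c)).det

open Matrix Finset Equiv Polynomial in
lemma Eaux_eq_detRowAlternating {n : ℕ} (T : Matrix (Fin n) (Fin n) ℂ)
    (i : Fin n → ℕ) (f : Fin n → Fin n) :
    Eaux T i f = Matrix.detRowAlternating (fun c => fun s => (T ^ i c) s (f c)) := rfl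

open Matrix Finset Equiv Polynomial in
lemma claimA {n : ℕ} (T : Matrix (Fin n) (Fin n) ℂ) (p : (Fin n → ℕ) →₀ ℂ)
    (hp : ∀ (σ : Equiv.Perm (Fin n)) (i : Fin n → ℕ), p (i ∘ σ) = p i)
    (f : Fin n → Fin n) (hf : ¬ Function.Injective f) :
    ∑ i ∈ p.support, p i * Eaux T i f = 0 := by
  obtain ⟨c₀, c₁, hfc, hne⟩ := Function.not_injective_iff.mp hf
  set τ : Equiv.Perm (Fin n) := Equiv.swap c₀ c₁ with hτ
  have hfτ : ∀ x, f (τ x) = f x := by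
    intro x
    rcases eq_or_ne x c₀ with rfl | h0
    · rw [hτ]; rw [Equiv.swap_apply_left]; exact hfc.symm
    rcases eq_or_ne x c₁ with rfl | h1
    · rw [hτ]; rw [Equiv.swap_apply_right]; exact hfc
    · rw [hτ]; rw [Equiv.swap_apply_of_ne_of_ne h0 h1]
  have key : ∀ i : Fin n → ℕ, Eaux T (i ∘ τ) f = - Eaux T i f := by
    intro i
    have h6 : (fun c => fun s => (T ^ (i ∘ τ) c) s (f c))
        = (fun c => fun s => (T ^ i c) s (f c)) ∘ ⇑τ := by
      funext c
      show (fun s => (T ^ i (τ c)) s (f c)) = fun s => (T ^ i (τ c)) s (f (τ c))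
      rw [hfτ c]
    rw [Eaux_eq_detRowAlternating, h6, AlternatingMap.map_perm,
      Equiv.Perm.sign_swap hne, Eaux_eq_detRowAlternating]
    simp [Units.smul_def]
  have hττ : ∀ i : Fin n → ℕ, (i ∘ ⇑τ) ∘ ⇑τ = i := by
    intro i; funext k
    show i (τ (τ k)) = i k
    rw [hτ, Equiv.swap_apply_self]
  have h8 : ∑ i ∈ p.support, p i * Eaux T i f
      = ∑ i ∈ p.support, p (i ∘ ⇑τ) * Eaux T (i ∘ ⇑τ) f := by
    refine Finset.sum_nbij' (fun i => i ∘ ⇑τ) (fun i => i ∘ ⇑τ) ?_ ?_ ?_ ?_ ?_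
    · intro a ha
      rw [Finsupp.mem_support_iff] at ha ⊢
      rw [hp τ a]; exact ha
    · intro a ha
      rw [Finsupp.mem_support_iff] at ha ⊢
      rw [hp τ a]; exact ha
    · intro a _; exact hττ a
    · intro a _; exact hττ a
    · intro a _
      rw [hττ a]
  have h9 : ∑ i ∈ p.support, p (i ∘ ⇑τ) * Eaux T (i ∘ ⇑τ) f
      = - ∑ i ∈ p.support, p i * Eaux T i f := by
    rw [← Finset.sum_neg_distrib]
    refine Finset.sum_congr rfl fun i _ => ?_
    rw [hp τ i, key i]; ring
  have h10 := h8.trans h9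
  have h11 : (2 : ℂ) * (∑ i ∈ p.support, p i * Eaux T i f) = 0 := by
    rw [two_mul]
    nth_rewrite 1 [h10]
    ring
  exact (mul_eq_zero.mp h11).resolve_left two_ne_zero

open Matrix Finset Equiv Polynomial in
lemma sum_reindex {n : ℕ} (p : (Fin n → ℕ) →₀ ℂ)
    (hp : ∀ (σ : Equiv.Perm (Fin n)) (i : Fin n → ℕ), p (i ∘ σ) = p i)
    (σ : Equiv.Perm (Fin n)) (x : Fin n → ℂ) :
    ∑ i ∈ p.support, p i * ∏ k, x (σ k) ^ i k
      = ∑ i ∈ p.support, p i * ∏ k, x k ^ i k := by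
  refine Finset.sum_nbij' (fun i => i ∘ ⇑σ⁻¹) (fun i => i ∘ ⇑σ) ?_ ?_ ?_ ?_ ?_
  · intro a ha
    rw [Finsupp.mem_support_iff] at ha ⊢
    rw [hp σ⁻¹ a]; exact ha
  · intro a ha
    rw [Finsupp.mem_support_iff] at ha ⊢
    rw [hp σ a]; exact ha
  · intro a _; funext k
    show a (σ⁻¹ (σ k)) = a k
    rw [Equiv.Perm.inv_def, Equiv.symm_apply_apply]
  · intro a _; funext k
    show a (σ (σ⁻¹ k)) = a k
    rw [Equiv.Perm.inv_def, Equiv.apply_symm_apply]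
  · intro a _
    have hprod : ∏ k, x (σ k) ^ a k = ∏ k, x k ^ (a ∘ ⇑σ⁻¹) k := by
      rw [← Equiv.prod_comp σ (fun k => x k ^ (a ∘ ⇑σ⁻¹) k)]
      refine Finset.prod_congr rfl fun k _ => ?_
      show x (σ k) ^ a k = x (σ k) ^ a (σ⁻¹ (σ k))
      rw [Equiv.Perm.inv_def, Equiv.symm_apply_apply]
    rw [hprod, hp σ⁻¹ a]

open Matrix Finset Equiv Polynomial in
lemma claimB {n : ℕ} (T : Matrix (Fin n) (Fin n) ℂ) (hT : T.BlockTriangular id)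
    (p : (Fin n → ℕ) →₀ ℂ)
    (hp : ∀ (σ : Equiv.Perm (Fin n)) (i : Fin n → ℕ), p (i ∘ σ) = p i)
    (σ : Equiv.Perm (Fin n)) :
    ∑ i ∈ p.support, p i * Eaux T i ⇑σ
      = ((Equiv.Perm.sign σ : ℤ) : ℂ) * ∑ i ∈ p.support, p i * ∏ k, T k k ^ i k := by
  have hE2 : ∀ i : Fin n → ℕ, Eaux T i ⇑σ
      = ((Equiv.Perm.sign σ : ℤ) : ℂ) * ∏ c, T c c ^ i (σ⁻¹ c) := by
    intro i
    have hA : (fun c => fun s => (T ^ i c) s (σ c))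
        = (fun c => fun s => (T ^ i (σ⁻¹ c)) s c) ∘ ⇑σ := by
      funext c
      show (fun s => (T ^ i c) s (σ c)) = fun s => (T ^ i (σ⁻¹ (σ c))) s (σ c)
      rw [Equiv.Perm.inv_def, Equiv.symm_apply_apply]
    have h13 : Matrix.detRowAlternating (fun c => fun s => (T ^ i (σ⁻¹ c)) s c)
        = ∏ c, T c c ^ i (σ⁻¹ c) := by
      have hlow : (Matrix.of fun c s => (T ^ i (σ⁻¹ c)) s c :
          Matrix (Fin n) (Fin n) ℂ).BlockTriangular OrderDual.toDual := by
        intro r s hrs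
        have hrs' : r < s := hrs
        exact blockTriangular_pow hT _ (show (id : Fin n → Fin n) r < id s from hrs')
      rw [show Matrix.detRowAlternating (fun c => fun s => (T ^ i (σ⁻¹ c)) s c)
        = (Matrix.of fun c s => (T ^ i (σ⁻¹ c)) s c : Matrix (Fin n) (Fin n) ℂ).det from rfl]
      rw [Matrix.det_of_lowerTriangular _ hlow]
      refine Finset.prod_congr rfl fun c _ => ?_
      rw [Matrix.of_apply, diag_pow_tri hT]
    rw [Eaux_eq_detRowAlternating, hA, AlternatingMap.map_perm, h13]
    simp [Units.smul_def]
  calc ∑ i ∈ p.support, p i * Eaux T i ⇑σ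
      = ((Equiv.Perm.sign σ : ℤ) : ℂ)
          * ∑ i ∈ p.support, p i * ∏ c, T c c ^ i (σ⁻¹ c) := by
        rw [Finset.mul_sum]
        refine Finset.sum_congr rfl fun i _ => ?_
        rw [hE2 i]; ring
    _ = ((Equiv.Perm.sign σ : ℤ) : ℂ)
          * ∑ i ∈ p.support, p i * ∏ c, T (σ c) (σ c) ^ i c := by
        congr 1
        refine Finset.sum_congr rfl fun i _ => ?_
        congr 1
        rw [← Equiv.prod_comp σ (fun c => T c c ^ i (σ⁻¹ c))]
        refine Finset.prod_congr rfl fun c _ => ?_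
        show T (σ c) (σ c) ^ i (σ⁻¹ (σ c)) = T (σ c) (σ c) ^ i c
        rw [Equiv.Perm.inv_def, Equiv.symm_apply_apply]
    _ = ((Equiv.Perm.sign σ : ℤ) : ℂ)
          * ∑ i ∈ p.support, p i * ∏ k, T k k ^ i k := by
        rw [sum_reindex p hp σ (fun c => T c c)]

open Matrix Finset Equiv Polynomial in
lemma det_expand {n : ℕ} (T Qm : Matrix (Fin n) (Fin n) ℂ) (i : Fin n → ℕ) :
    (Matrix.of fun s c => ((T ^ i c) * Qm) s c).det
      = ∑ f : Fin n → Fin n, (∏ c, Qm (f c) c) * Eaux T i f := by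
  classical
  have h3 : (Matrix.of fun s c => ((T ^ i c) * Qm) s c).det
      = (Matrix.of fun c s => ((T ^ i c) * Qm) s c).det := by
    rw [← Matrix.det_transpose (Matrix.of fun c s => ((T ^ i c) * Qm) s c)]
    congr 1
  rw [h3]
  have h4 : (Matrix.of fun c s => ((T ^ i c) * Qm) s c : Matrix (Fin n) (Fin n) ℂ)
      = Matrix.of (fun c => ∑ j, Qm j c • fun s => (T ^ i c) s j) := by
    ext c s
    rw [Matrix.of_apply, Matrix.of_apply, Matrix.mul_apply, Finset.sum_apply]
    refine Finset.sum_congr rfl fun j _ => ?_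
    simp [mul_comm]
  rw [h4]
  have h5 : (Matrix.of (fun c => ∑ j, Qm j c • fun s => (T ^ i c) s j)
        : Matrix (Fin n) (Fin n) ℂ).det
      = ∑ f : Fin n → Fin n,
          Matrix.detRowAlternating (fun c => Qm (f c) c • fun s => (T ^ i c) s (f c)) := by
    show Matrix.detRowAlternating (fun c => ∑ j, Qm j c • fun s => (T ^ i c) s j) = _
    exact Matrix.detRowAlternating.toMultilinearMap.map_sum
      (g := fun c j => Qm j c • fun s => (T ^ i c) s j)
  rw [h5]
  refine Finset.sum_congr rfl fun f _ => ?_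
  have h6 := Matrix.detRowAlternating.toMultilinearMap.map_smul_univ
    (fun c => Qm (f c) c) (fun c => fun s => (T ^ i c) s (f c))
  rw [show Matrix.detRowAlternating (fun c => Qm (f c) c • fun s => (T ^ i c) s (f c))
    = Matrix.detRowAlternating.toMultilinearMap
        (fun c => Qm (f c) c • fun s => (T ^ i c) s (f c)) from rfl, h6,
    Eaux_eq_detRowAlternating, smul_eq_mul]
  rfl

/-- If `B` is an `n × n` complex matrix with eigenvalues `b₁,…,bₙ` (counted with
algebraic multiplicity) and `q(x₁,…,xₙ) = Σᵢ pᵢ x₁^{i₁}⋯xₙ^{iₙ}` is a symmetric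
polynomial, then `q(b₁,…,bₙ) = Σᵢ pᵢ det(B^{i₁}_1, …, B^{iₙ}_n)`. -/
theorem symm_poly_eigenvalues_eq_sum_det {n : ℕ}
    (B : Matrix (Fin n) (Fin n) ℂ) (b : Fin n → ℂ)
    (hb : B.charpoly.roots = Multiset.map b Finset.univ.val)
    (p : (Fin n → ℕ) →₀ ℂ)
    (hp : ∀ (σ : Equiv.Perm (Fin n)) (i : Fin n → ℕ), p (i ∘ σ) = p i) :
    ∑ i ∈ p.support, p i * ∏ k : Fin n, b k ^ i k
      = ∑ i ∈ p.support, p i * (Matrix.of fun r c => (B ^ i c) r c).det := by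
  classical
  obtain ⟨c, hT⟩ := exists_triangular_basis n (Fin n → ℂ) inferInstance inferInstance
    inferInstance (Module.finrank_fin_fun ℂ)
    (Matrix.toLin (Pi.basisFun ℂ (Fin n)) (Pi.basisFun ℂ (Fin n)) B)
  set pb := Pi.basisFun ℂ (Fin n) with hpb
  set f0 := Matrix.toLin pb pb B with hf0
  set T := LinearMap.toMatrix c c f0 with hTdef
  set P := pb.toMatrix ⇑c with hPdef
  set Qm := c.toMatrix ⇑pb with hQmdef
  have hPQ : P * Qm = 1 := Module.Basis.toMatrix_mul_toMatrix_flip pb c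
  have hQP : Qm * P = 1 := Module.Basis.toMatrix_mul_toMatrix_flip c pb
  have hB : B = P * T * Qm := by
    have h1 := basis_toMatrix_mul_linearMap_toMatrix_mul_basis_toMatrix
      (b := pb) (b' := c) (c := pb) (c' := c) (f := f0)
    rw [h1, hf0, LinearMap.toMatrix_toLin]
  have hTchar : T.charpoly = B.charpoly := by
    rw [hTdef, LinearMap.charpoly_toMatrix]
    conv_rhs => rw [show B = LinearMap.toMatrix pb pb f0 by
      rw [hf0, LinearMap.toMatrix_toLin]]
    rw [LinearMap.charpoly_toMatrix]
  have hroots : Multiset.map b Finset.univ.val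
      = Multiset.map (fun k => T k k) Finset.univ.val := by
    rw [← hb, ← hTchar, Matrix.charpoly_of_upperTriangular T hT]
    have h2 : ∏ i : Fin n, (Polynomial.X - Polynomial.C (T i i))
        = ((Multiset.map (fun k => T k k) Finset.univ.val).map fun a => Polynomial.X - Polynomial.C a).prod := by
      rw [Multiset.map_map]
      rfl
    rw [h2, Polynomial.roots_multiset_prod_X_sub_C]
  obtain ⟨τ, hτ⟩ := exists_perm_comp_eq b (fun k => T k k) hroots
  have hLHS : ∑ i ∈ p.support, p i * ∏ k, b k ^ i k
      = ∑ i ∈ p.support, p i * ∏ k, T k k ^ i k := by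
    have h3 := sum_reindex p hp τ b
    have h4 : ∀ k, b (τ k) = T k k := fun k => congrFun hτ k
    simp only [h4] at h3
    exact h3.symm
  rw [hLHS]
  have hpow := pow_conj hB hPQ hQP
  have hdet : ∀ i : Fin n → ℕ,
      (Matrix.of fun r c' => (B ^ i c') r c').det
        = P.det * ∑ f : Fin n → Fin n, (∏ c', Qm (f c') c') * Eaux T i f := by
    intro i
    have h1 : (Matrix.of fun r c' => (B ^ i c') r c')
        = P * Matrix.of (fun s c' => ((T ^ i c') * Qm) s c') := by
      ext r c'
      rw [Matrix.of_apply, Matrix.mul_apply]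
      have h2 : (B ^ i c') r c' = (P * ((T ^ i c') * Qm)) r c' := by
        rw [hpow (i c'), Matrix.mul_assoc]
      rw [h2, Matrix.mul_apply]
      refine Finset.sum_congr rfl fun s _ => ?_
      rw [Matrix.of_apply]
    rw [h1, Matrix.det_mul, det_expand]
  symm
  have hfilter : ∀ f : Fin n → Fin n, (¬ Function.Bijective f) →
      P.det * ((∏ c', Qm (f c') c') * ∑ i ∈ p.support, p i * Eaux T i f) = 0 := by
    intro f hf
    have hni : ¬ Function.Injective f := fun hinj =>
      hf (Finite.injective_iff_bijective.mp hinj)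
    rw [claimA T p hp f hni, mul_zero, mul_zero]
  calc ∑ i ∈ p.support, p i * (Matrix.of fun r c' => (B ^ i c') r c').det
      = ∑ i ∈ p.support, ∑ f : Fin n → Fin n,
          P.det * ((∏ c', Qm (f c') c') * (p i * Eaux T i f)) := by
        refine Finset.sum_congr rfl fun i _ => ?_
        rw [hdet i, Finset.mul_sum, Finset.mul_sum]
        refine Finset.sum_congr rfl fun f _ => by ring
    _ = ∑ f : Fin n → Fin n, ∑ i ∈ p.support,
          P.det * ((∏ c', Qm (f c') c') * (p i * Eaux T i f)) := Finset.sum_comm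
    _ = ∑ f : Fin n → Fin n,
          P.det * ((∏ c', Qm (f c') c') * ∑ i ∈ p.support, p i * Eaux T i f) := by
        refine Finset.sum_congr rfl fun f _ => ?_
        rw [Finset.mul_sum, Finset.mul_sum]
    _ = ∑ σ : Equiv.Perm (Fin n),
          P.det * ((∏ c', Qm (σ c') c') * ∑ i ∈ p.support, p i * Eaux T i ⇑σ) := by
        rw [← Finset.sum_filter_of_ne
          (p := fun f : Fin n → Fin n => Function.Bijective f)
          (fun f _ hne => by
            by_contra hbij
            exact hne (hfilter f hbij))]
        refine Finset.sum_bij' (fun f hf => Equiv.ofBijective f (Finset.mem_filter.mp hf).2)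
          (fun σ _ => ⇑σ) ?_ ?_ ?_ ?_ ?_
        · intro a ha; exact Finset.mem_univ _
        · intro σ _
          exact Finset.mem_filter.mpr ⟨Finset.mem_univ _, σ.bijective⟩
        · intro a ha; rfl
        · intro σ _; exact Equiv.ext fun x => rfl
        · intro a ha; rfl
    _ = ∑ σ : Equiv.Perm (Fin n),
          P.det * (∑ i ∈ p.support, p i * ∏ k, T k k ^ i k)
            * (((Equiv.Perm.sign σ : ℤ) : ℂ) * ∏ c', Qm (σ c') c') := by
        refine Finset.sum_congr rfl fun σ _ => ?_
        rw [claimB T hT p hp σ]; ring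
    _ = P.det * (∑ i ∈ p.support, p i * ∏ k, T k k ^ i k) * Qm.det := by
        rw [← Finset.mul_sum, Matrix.det_apply' Qm]
    _ = ∑ i ∈ p.support, p i * ∏ k, T k k ^ i k := by
        have hdet1 : P.det * Qm.det = 1 := by
          rw [← Matrix.det_mul, hPQ, Matrix.det_one]
        calc P.det * (∑ i ∈ p.support, p i * ∏ k, T k k ^ i k) * Qm.det
            = (P.det * Qm.det) * (∑ i ∈ p.support, p i * ∏ k, T k k ^ i k) := by ring
          _ = ∑ i ∈ p.support, p i * ∏ k, T k k ^ i k := by rw [hdet1, one_mul]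
end

section
/- Let p : I^n → ℝ be symmetric coefficients and M^{(j)} ∈ ℝ^{n×n} a family of matrices, and define F(M) = Σ_{i ∈ I^n} p(i) det(M^{(i₁)}_1,…,M^{(iₙ)}_n). Then for any n×n matrices X, Y: F(X M Y) = det(X)·det(Y)·F(M), where (XMY)^{(j)} = X M^{(j)} Y for each j. -/
open Matrix Finset

lemma detRowAlternating_eq_det_of {n : ℕ} (v : Fin n → Fin n → ℝ) :
    Matrix.detRowAlternating v = (Matrix.of v).det := rfl

lemma update_mulVec {n : ℕ} {I : Type*} [DecidableEq (Fin n)]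
    (M : I → Matrix (Fin n) (Fin n) ℝ)
    (i : Fin n → I) (y : Fin n → Fin n → ℝ) (c : Fin n) (x : Fin n → ℝ) :
    (fun c' => M (i c') *ᵥ Function.update y c x c')
      = Function.update (fun c' => M (i c') *ᵥ y c') c (M (i c) *ᵥ x) := by
  funext c'
  by_cases h : c' = c
  · subst h; simp
  · simp [Function.update_of_ne h]

/-- The p-weighted sum of determinants, as an alternating map in the vectors `y`. -/
noncomputable def detSumAlt {n : ℕ} {I : Type*} (p : (Fin n → I) →₀ ℝ)
    (hp : ∀ (σ : Equiv.Perm (Fin n)) (i : Fin n → I), p (i ∘ σ) = p i)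
    (M : I → Matrix (Fin n) (Fin n) ℝ) : (Fin n → ℝ) [⋀^Fin n]→ₗ[ℝ] ℝ where
  toFun y := ∑ i ∈ p.support, p i * Matrix.detRowAlternating (fun c => M (i c) *ᵥ y c)
  map_update_add' y c v w := by
    simp only [update_mulVec, Matrix.mulVec_add, AlternatingMap.map_update_add, mul_add,
      Finset.sum_add_distrib]
  map_update_smul' y c a v := by
    simp only [update_mulVec, Matrix.mulVec_smul, AlternatingMap.map_update_smul,
      smul_eq_mul]
    rw [Finset.mul_sum]
    exact Finset.sum_congr rfl fun _ _ => by ring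
  map_eq_zero_of_eq' y c₁ c₂ h hne := by
    classical
    refine Finset.sum_involution (fun i _ => i ∘ Equiv.swap c₁ c₂) ?_ ?_ ?_ ?_
    · intro i hi
      have hswap : (fun c => M ((i ∘ Equiv.swap c₁ c₂) c) *ᵥ y c)
          = (fun c => M (i c) *ᵥ y c) ∘ Equiv.swap c₁ c₂ := by
        funext c
        have hy : y ((Equiv.swap c₁ c₂) c) = y c := by
          rcases eq_or_ne c c₁ with rfl | h1
          · rw [Equiv.swap_apply_left]; exact h.symm
          rcases eq_or_ne c c₂ with rfl | h2
          · rw [Equiv.swap_apply_right]; exact h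
          · rw [Equiv.swap_apply_of_ne_of_ne h1 h2]
        simp only [Function.comp_apply, hy]
      rw [hp (Equiv.swap c₁ c₂) i, hswap,
        AlternatingMap.map_swap (Matrix.detRowAlternating (R := ℝ) (n := Fin n))
          (fun c => M (i c) *ᵥ y c) hne]
      ring
    · intro i hi hf hgi
      apply hf
      have hi12 : i c₁ = i c₂ := by
        have := congrFun hgi c₁
        simpa [Equiv.swap_apply_left] using this.symm
      have hz : Matrix.detRowAlternating (fun c => M (i c) *ᵥ y c) = 0 := by
        apply AlternatingMap.map_eq_zero_of_eq _ _ _ hne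
        rw [hi12, h]
      rw [hz, mul_zero]
    · intro i hi
      rw [Finsupp.mem_support_iff] at hi ⊢
      rwa [hp]
    · intro i hi
      funext c
      simp [Equiv.swap_apply_self]

/-- For symmetric coefficients `p` and matrices `M⁽ʲ⁾`, define
`F(M) = Σᵢ p(i) det(M^{(i₁)}_1,…,M^{(iₙ)}_n)`. Then for any matrices `X, Y`:
`F(X M Y) = det(X) · det(Y) · F(M)`, where `(XMY)⁽ʲ⁾ = X M⁽ʲ⁾ Y`. -/
theorem det_sum_mul_left_right {n : ℕ} {I : Type*}
    (p : (Fin n → I) →₀ ℝ)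
    (hp : ∀ (σ : Equiv.Perm (Fin n)) (i : Fin n → I), p (i ∘ σ) = p i)
    (M : I → Matrix (Fin n) (Fin n) ℝ) (X Y : Matrix (Fin n) (Fin n) ℝ) :
    ∑ i ∈ p.support, p i * (Matrix.of fun r c => (X * M (i c) * Y) r c).det
      = X.det * Y.det *
        ∑ i ∈ p.support, p i * (Matrix.of fun r c => M (i c) r c).det := by
  classical
  -- Step 1: pull out X
  have h1 : ∀ i : Fin n → I,
      (Matrix.of fun r c => (X * M (i c) * Y) r c)
        = X * Matrix.of fun r c => (M (i c) * Y) r c := by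
    intro i
    ext r c
    simp only [Matrix.mul_apply, Matrix.of_apply, Finset.sum_mul, Finset.mul_sum, mul_assoc]
    rw [Finset.sum_comm]
  have h2 : ∀ i : Fin n → I,
      (Matrix.of fun r c => (M (i c) * Y) r c).det
        = Matrix.detRowAlternating (fun c => M (i c) *ᵥ (Yᵀ c)) := by
    intro i
    rw [detRowAlternating_eq_det_of, ← Matrix.det_transpose]
    congr 1
  have key := (detSumAlt p hp M).eq_smul_basis_det (Pi.basisFun ℝ (Fin n))
  have happ := congrArg (fun f => f (fun c => Yᵀ c)) key
  simp only [AlternatingMap.smul_apply, smul_eq_mul, Pi.basisFun_det] at happ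
  have hYdet : Matrix.detRowAlternating (fun c => Yᵀ c) = Y.det :=
    Matrix.det_transpose Y
  have hbasis : (detSumAlt p hp M) (Pi.basisFun ℝ (Fin n))
      = ∑ i ∈ p.support, p i * (Matrix.of fun r c => M (i c) r c).det := by
    show (∑ i ∈ p.support, p i * Matrix.detRowAlternating
        (fun c => M (i c) *ᵥ (Pi.basisFun ℝ (Fin n)) c)) = _
    refine Finset.sum_congr rfl fun i _ => ?_
    congr 1
    rw [detRowAlternating_eq_det_of, ← Matrix.det_transpose]
    congr 1
    ext a b
    simp [Pi.basisFun_apply]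
  have hleft : (detSumAlt p hp M) (fun c => Yᵀ c)
      = ∑ i ∈ p.support, p i * (Matrix.of fun r c => (M (i c) * Y) r c).det := by
    show (∑ i ∈ p.support, p i * Matrix.detRowAlternating
        (fun c => M (i c) *ᵥ (Yᵀ c))) = _
    exact Finset.sum_congr rfl fun i _ => by rw [h2]
  calc ∑ i ∈ p.support, p i * (Matrix.of fun r c => (X * M (i c) * Y) r c).det
      = ∑ i ∈ p.support, p i * (X.det * (Matrix.of fun r c => (M (i c) * Y) r c).det) := by
        refine Finset.sum_congr rfl fun i _ => ?_
        rw [h1, Matrix.det_mul]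
    _ = X.det * ∑ i ∈ p.support, p i * (Matrix.of fun r c => (M (i c) * Y) r c).det := by
        rw [Finset.mul_sum]; exact Finset.sum_congr rfl fun i _ => by ring
    _ = X.det * ((detSumAlt p hp M) (fun c => Yᵀ c)) := by rw [hleft]
    _ = X.det * (Y.det * ∑ i ∈ p.support, p i * (Matrix.of fun r c => M (i c) r c).det) := by
        rw [happ, hYdet, hbasis]; ring
    _ = _ := by ring
end
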